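/- Let a_s, b_s⁺, b_s⁻ ∈ ℂ with a_s + b_s⁺ + b_s⁻ = 0, and let U(λ) = a_s/(λ - s) + b_s⁺/(λ - s - i) + b_s⁻/(λ - s + i). Then the rational function V(λ) = b_s⁻/(λ - s + i/2) - b_s⁺/(λ - s - i/2) satisfies U(λ) = V(λ + i/2) - V(λ - i/2). -/
import Mathlib

open Complex

/-- Telescoping decomposition (rational case): if `a + b⁺ + b⁻ = 0`, then
`U(λ) = a/(λ-s) + b⁺/(λ-s-i) + b⁻/(λ-s+i)` equals `V(λ+i/2) - V(λ-i/2)` where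
`V(λ) = b⁻/(λ-s+i/2) - b⁺/(λ-s-i/2)`. -/
theorem telescoping_rational_case (s a bp bm : ℂ) (h : a + bp + bm = 0) :
    ∀ z : ℂ, z ≠ s → z ≠ s + I → z ≠ s - I →
      a / (z - s) + bp / (z - s - I) + bm / (z - s + I) =
        (bm / (z + I / 2 - s + I / 2) - bp / (z + I / 2 - s - I / 2)) -
        (bm / (z - I / 2 - s + I / 2) - bp / (z - I / 2 - s - I / 2)) := by
  intro z h0 h1 h2
  have d0 : z - s ≠ 0 := sub_ne_zero.mpr h0
  have d1 : z - s - I ≠ 0 := by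
    intro hh; apply h1; linear_combination hh
  have d2 : z - s + I ≠ 0 := by
    intro hh; apply h2; linear_combination hh
  have ha : a = -bp - bm := by linear_combination h
  subst ha
  have e1 : z + I / 2 - s + I / 2 = z - s + I := by ring
  have e2 : z + I / 2 - s - I / 2 = z - s := by ring
  have e3 : z - I / 2 - s + I / 2 = z - s := by ring
  have e4 : z - I / 2 - s - I / 2 = z - s - I := by ring
  rw [e1, e2, e3, e4]
  field_simp
  ring
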